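/- Let D₀ be a fundamental discriminant with gcd(D₀, N) = 1 and Q = [a,b,c] a binary quadratic form with N ∣ a. If gcd(D₀, a, b, c) = 1 and Q represents an integer r with gcd(r, D₀) = 1, then the form Q|W_N = [cN, −b, a/N] represents Nr, and gcd(Nr, D₀) = 1; moreover gcd(D₀, cN, −b, a/N) = 1. -/

import Mathlib

/-- A binary quadratic form `[a,b,c]` represents `r` if `ax² + bxy + cy² = r`
has an integer solution. -/
def Represents (a b c r : ℤ) : Prop :=
  ∃ x y : ℤ, a * x ^ 2 + b * x * y + c * y ^ 2 = r

/-- A fundamental discriminant: either `D ≡ 1 (mod 4)` squarefree, or `D = 4m`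
with `m` squarefree and `m ≡ 2, 3 (mod 4)`. -/
def IsFundamentalDiscriminant (D : ℤ) : Prop :=
  (D % 4 = 1 ∧ Squarefree D) ∨
  (D % 4 = 0 ∧ Squarefree (D / 4) ∧ (D / 4 % 4 = 2 ∨ D / 4 % 4 = 3))

/-- if `gcd(D₀,a,b,c) = 1` and `Q = [a,b,c]` (with `N ∣ a`) represents
`r` coprime to `D₀`, then `Q|W_N = [cN, −b, a/N]` represents `Nr`, `gcd(Nr, D₀) = 1`,
and `gcd(D₀, cN, −b, a/N) = 1`. -/
theorem fricke_represents (N D₀ a b c r : ℤ) (hN : 0 < N)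
    (hfund : IsFundamentalDiscriminant D₀)
    (hcop : Int.gcd D₀ N = 1) (hna : N ∣ a)
    (hgcd : Nat.gcd D₀.natAbs (Nat.gcd a.natAbs (Nat.gcd b.natAbs c.natAbs)) = 1)
    (hrep : Represents a b c r) (hr : Int.gcd r D₀ = 1) :
    Represents (c * N) (-b) (a / N) (N * r) ∧ Int.gcd (N * r) D₀ = 1 ∧
      Nat.gcd D₀.natAbs
        (Nat.gcd (c * N).natAbs (Nat.gcd (-b).natAbs (a / N).natAbs)) = 1 := by
  obtain ⟨x, y, hxy⟩ := hrep
  obtain ⟨k, hk⟩ := hna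
  have hNe : N ≠ 0 := hN.ne'
  have hdiv : a / N = k := by rw [hk, Int.mul_ediv_cancel_left _ hNe]
  refine ⟨⟨y, -(N * x), ?_⟩, ?_, ?_⟩
  · rw [hdiv]; subst hk; linear_combination N * hxy
  · rw [← Int.isCoprime_iff_gcd_eq_one]
    exact IsCoprime.mul_left ((Int.isCoprime_iff_gcd_eq_one.mpr hcop).symm)
      (Int.isCoprime_iff_gcd_eq_one.mpr hr)
  · set d := Nat.gcd D₀.natAbs
      (Nat.gcd (c * N).natAbs (Nat.gcd (-b).natAbs (a / N).natAbs)) with hd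
    have hdD : d ∣ D₀.natAbs := Nat.gcd_dvd_left _ _
    have hdcN : d ∣ (c * N).natAbs := (Nat.gcd_dvd_right _ _).trans (Nat.gcd_dvd_left _ _)
    have hdb : d ∣ b.natAbs := by
      have : d ∣ (-b).natAbs := (Nat.gcd_dvd_right _ _).trans
        ((Nat.gcd_dvd_right _ _).trans (Nat.gcd_dvd_left _ _))
      simpa using this
    have hdaN : d ∣ (a / N).natAbs :=
      (Nat.gcd_dvd_right _ _).trans ((Nat.gcd_dvd_right _ _).trans (Nat.gcd_dvd_right _ _))
    have hdN : Nat.Coprime d N.natAbs :=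
      Nat.Coprime.coprime_dvd_left hdD hcop
    have hdc : d ∣ c.natAbs := by
      rw [Int.natAbs_mul] at hdcN
      exact (Nat.Coprime.dvd_of_dvd_mul_right hdN) hdcN
    have hda : d ∣ a.natAbs := by
      rw [hdiv] at hdaN
      have : k.natAbs ∣ a.natAbs := by
        rw [hk, Int.natAbs_mul]; exact Dvd.intro_left _ rfl
      exact hdaN.trans this
    have : d ∣ 1 := by
      rw [← hgcd]
      exact Nat.dvd_gcd hdD (Nat.dvd_gcd hda (Nat.dvd_gcd hdb hdc))
    exact Nat.eq_one_of_dvd_one this
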